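/- Let N be a nonzero integer and let r ∈ ℚ lie in ℤ[1/N]. Then for every natural number n, the generalized binomial coefficient C(r, n) = r(r−1)⋯(r−n+1)/n! lies in ℤ[1/N]. Equivalently, the binomial power series (1+h)^r = Σ_{n≥0} C(r,n) h^n has all of its coefficients in ℤ[1/N]. -/

import Mathlib

/-- The generalized binomial coefficient `C(r, n) = r(r−1)⋯(r−n+1)/n!`, i.e. the
coefficient of `h^n` in the binomial power series `(1+h)^r`. -/
noncomputable def gbinom (r : ℚ) (n : ℕ) : ℚ :=
  (∏ i ∈ Finset.range n, (r - (i : ℚ))) / (n.factorial : ℚ)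


private lemma prod_eq_descPoch (a : ℤ) (n : ℕ) :
    ∏ i ∈ Finset.range n, (a - i) = (descPochhammer ℤ n).eval a := by
  induction n with
  | zero => simp
  | succ n ih => rw [Finset.prod_range_succ, ih, descPochhammer_succ_right]; simp [mul_comm]

private lemma fact_dvd_prod (a : ℤ) (n : ℕ) :
    (n.factorial : ℤ) ∣ ∏ i ∈ Finset.range n, (a - i) := by
  rw [prod_eq_descPoch]
  have := Ring.descPochhammer_eq_factorial_smul_choose (R := ℤ) a n
  rw [← Polynomial.eval_eq_smeval] at this
  exact ⟨Ring.choose a n, by rw [this]; simp [nsmul_eq_mul]⟩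

private lemma prod_modEq {B : ℤ} {n : ℕ} (f g : ℕ → ℤ) (h : ∀ i < n, f i ≡ g i [ZMOD B]) :
    ∏ i ∈ Finset.range n, f i ≡ ∏ i ∈ Finset.range n, g i [ZMOD B] := by
  induction n with
  | zero => simp
  | succ n ih =>
    rw [Finset.prod_range_succ, Finset.prod_range_succ]
    exact (ih fun i hi => h i (by omega)).mul (h n (by omega))

/-- If `B` divides `n!` and is coprime to `d`, then `B` divides the product
`∏_{i<n} (m - i·d)`. -/
private lemma key_dvd {B d m : ℤ} {n : ℕ} (hB : B ∣ (n.factorial : ℤ))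
    (hcop : IsCoprime d B) : B ∣ ∏ i ∈ Finset.range n, (m - i * d) := by
  obtain ⟨e, f, hef⟩ := hcop
  have hmod : ∀ i < n, (m - i * d) ≡ d * (e * m - i) [ZMOD B] := by
    intro i _
    rw [Int.modEq_iff_dvd]
    exact ⟨-(f * m), by linear_combination m * hef⟩
  have h1 : (∏ i ∈ Finset.range n, (m - i * d)) ≡
      ∏ i ∈ Finset.range n, (d * (e * m - i)) [ZMOD B] := prod_modEq _ _ hmod
  have h2 : ∏ i ∈ Finset.range n, (d * (e * m - i)) =
      d ^ n * ∏ i ∈ Finset.range n, (e * m - i) := by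
    rw [Finset.prod_mul_distrib, Finset.prod_const, Finset.card_range]
  have h3 : B ∣ ∏ i ∈ Finset.range n, (d * (e * m - i)) := by
    rw [h2]
    exact Dvd.dvd.mul_left (hB.trans (fact_dvd_prod (e * m) n)) _
  exact (Int.modEq_zero_iff_dvd).mp (h1.trans ((Int.modEq_zero_iff_dvd).mpr h3))

/-- Every positive `F` splits as `A * B` with `B` coprime to `M` and `A ∣ M ^ F`. -/
private lemma exists_split (M : ℕ) (hM : 0 < M) :
    ∀ F : ℕ, 0 < F → ∃ A B : ℕ, F = A * B ∧ Nat.Coprime B M ∧ A ∣ M ^ F := by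
  intro F
  induction F using Nat.strong_induction_on with
  | _ F ih =>
    intro hF
    by_cases hg : Nat.gcd F M = 1
    · exact ⟨1, F, by ring, hg, one_dvd _⟩
    · set g := Nat.gcd F M with hgdef
      have hgF : g ∣ F := Nat.gcd_dvd_left F M
      have hgM : g ∣ M := Nat.gcd_dvd_right F M
      have hg0 : 0 < g := Nat.gcd_pos_of_pos_left M hF
      have hg2 : 2 ≤ g := by omega
      obtain ⟨F', hF'⟩ := hgF
      have hF'pos : 0 < F' := by
        rcases Nat.eq_zero_or_pos F' with h | h
        · subst h; simp at hF'; omega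
        · exact h
      have hlt : F' < F := by
        calc F' < g * F' := by nlinarith
        _ = F := hF'.symm
      obtain ⟨A', B', h1, h2, h3⟩ := ih F' hlt hF'pos
      refine ⟨g * A', B', by rw [hF', h1]; ring, h2, ?_⟩
      calc g * A' ∣ M * M ^ F' := mul_dvd_mul hgM h3
      _ = M ^ (F' + 1) := (pow_succ' M F').symm
      _ ∣ M ^ F := pow_dvd_pow M (by omega)

/-- If `N` is a nonzero integer and `r ∈ ℤ[1/N]`, then every
generalized binomial coefficient `C(r, n)` lies in `ℤ[1/N]`; equivalently, all
coefficients of the binomial series `(1+h)^r` lie in `ℤ[1/N]`. -/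
theorem stmt12 (N : ℤ) (hN : N ≠ 0) (r : ℚ)
    (hr : ∃ (m : ℤ) (k : ℕ), r = (m : ℚ) / (N : ℚ) ^ k) :
    ∀ n : ℕ, ∃ (m' : ℤ) (k' : ℕ), gbinom r n = (m' : ℚ) / (N : ℚ) ^ k' := by
  obtain ⟨m, k, hrmk⟩ := hr
  intro n
  set F := n.factorial with hFdef
  have hFpos : 0 < F := n.factorial_pos
  have hM : 0 < N.natAbs := Int.natAbs_pos.mpr hN
  obtain ⟨A, B, hAB, hBcop, hApow⟩ := exists_split N.natAbs hM F hFpos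
  have hA0 : A ≠ 0 := by rintro rfl; simp at hAB; omega
  have hB0 : B ≠ 0 := by rintro rfl; simp at hAB; omega
  -- the integer product P
  set d : ℤ := N ^ k with hddef
  set P : ℤ := ∏ i ∈ Finset.range n, (m - i * d) with hPdef
  -- B divides P
  have hcop : IsCoprime d (B : ℤ) := by
    apply IsCoprime.pow_left
    rw [Int.isCoprime_iff_gcd_eq_one]
    simpa [Int.gcd, Nat.coprime_comm] using hBcop
  have hBF : (B : ℤ) ∣ (F : ℤ) := Int.natCast_dvd_natCast.mpr ⟨A, by rw [hAB]; ring⟩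
  have hBP : (B : ℤ) ∣ P := key_dvd (by rwa [hFdef] at hBF) hcop
  obtain ⟨P₁, hP₁⟩ := hBP
  -- A divides N ^ F
  have hAN : (A : ℤ) ∣ N ^ F := by
    have h1 : (A : ℤ) ∣ (N.natAbs : ℤ) ^ F := by
      exact_mod_cast Int.natCast_dvd_natCast.mpr hApow
    exact h1.trans (pow_dvd_pow_of_dvd (Int.natAbs_dvd.mpr dvd_rfl) F)
  obtain ⟨Q, hQ⟩ := hAN
  have hQ0 : Q ≠ 0 := by
    rintro rfl
    rw [mul_zero] at hQ
    exact pow_ne_zero F hN hQ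
  refine ⟨P₁ * Q, k * n + F, ?_⟩
  -- express gbinom via P
  have hNQ : (N : ℚ) ≠ 0 := Int.cast_ne_zero.mpr hN
  have hdQ : ((d : ℤ) : ℚ) ≠ 0 := by
    rw [hddef]; push_cast; exact pow_ne_zero k hNQ
  have hfac : ∀ i : ℕ, (r - (i : ℚ)) = (((m : ℚ) - i * (d : ℚ))) / (d : ℚ) := by
    intro i
    rw [hrmk, hddef]
    push_cast
    field_simp
  have hprod : ∏ i ∈ Finset.range n, (r - (i : ℚ)) = (P : ℚ) / ((d : ℚ)) ^ n := by
    calc ∏ i ∈ Finset.range n, (r - (i : ℚ))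
        = ∏ i ∈ Finset.range n, (((m : ℚ) - i * (d : ℚ)) / (d : ℚ)) :=
          Finset.prod_congr rfl (fun i _ => hfac i)
      _ = (∏ i ∈ Finset.range n, ((m : ℚ) - i * (d : ℚ))) / (d : ℚ) ^ n := by
          rw [Finset.prod_div_distrib, Finset.prod_const, Finset.card_range]
      _ = (P : ℚ) / ((d : ℚ)) ^ n := by rw [hPdef]; push_cast; ring_nf; rw [mul_comm]; congr 1; exact Finset.prod_congr rfl (fun x _ => by ring)
  have hgb : gbinom r n = (P : ℚ) / ((d : ℚ) ^ n * (F : ℚ)) := by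
    rw [gbinom, hprod, div_div, hFdef]
  rw [hgb]
  -- now the algebra
  have hFQ : (F : ℚ) = (A : ℚ) * (B : ℚ) := by exact_mod_cast congrArg Nat.cast hAB
  have hPQ : (P : ℚ) = (B : ℚ) * (P₁ : ℚ) := by exact_mod_cast congrArg Int.cast hP₁
  have hNFQ : (N : ℚ) ^ F = (A : ℚ) * (Q : ℚ) := by exact_mod_cast congrArg Int.cast hQ
  have hdQ' : ((d : ℤ) : ℚ) = (N : ℚ) ^ k := by rw [hddef]; push_cast; ring
  have hAQ0 : (A : ℚ) ≠ 0 := Nat.cast_ne_zero.mpr hA0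
  have hBQ0 : (B : ℚ) ≠ 0 := Nat.cast_ne_zero.mpr hB0
  have hQQ0 : (Q : ℚ) ≠ 0 := Int.cast_ne_zero.mpr hQ0
  push_cast
  rw [hdQ', hFQ, hPQ]
  rw [pow_add, ← pow_mul]
  field_simp
  linear_combination (P₁ : ℚ) * hNFQ
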